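/- Let X = ℓ_p (1 ≤ p < ∞) and P(x) = x₁ · B(x) where B is the backward shift. Then ‖P‖ = 2^{-2/p}, so the limit radius is r_P = 2^{2/p}. -/

import Mathlib

open Filter

/-- On `ℓ_p` (`1 ≤ p < ∞`), the 2-homogeneous polynomial
`P(x) = x₁ • B(x)` (with `B` the backward shift) has norm
`‖P‖ = sup_{‖x‖ ≤ 1} ‖P x‖ = 2^(-2/p)`, so the limit radius is `r_P = 2^(2/p)`. -/
theorem norm_of_x1_backward_shift (p : ENNReal) [Fact (1 ≤ p)] (hp : p ≠ ⊤)
    (P : lp (fun _ : ℕ => ℂ) p → lp (fun _ : ℕ => ℂ) p)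
    (hP : ∀ (x : lp (fun _ : ℕ => ℂ) p) (j : ℕ),
      (P x : ℕ → ℂ) j = (x : ℕ → ℂ) 0 * (x : ℕ → ℂ) (j + 1)) :
    (⨆ x : {x : lp (fun _ : ℕ => ℂ) p // ‖x‖ ≤ 1}, ‖P x.1‖)
      = (2 : ℝ) ^ (-(2 : ℝ) / p.toReal) := by
  have hp1 : (1:ℝ) ≤ p.toReal := by
    have h := Fact.out (p := (1:ENNReal) ≤ p)
    simpa using ENNReal.toReal_mono hp h
  set q := p.toReal with hqdef
  have hq0 : 0 < q := lt_of_lt_of_le one_pos hp1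
  have hqne : q ≠ 0 := hq0.ne'
  have hquarter : (1/4 : ℝ) = (2:ℝ) ^ (-2 : ℝ) := by
    rw [show (-2:ℝ) = ((-2:ℤ):ℝ) by norm_num, Real.rpow_intCast]; norm_num
  have htarget : ((1/4 : ℝ)) ^ (1/q) = (2:ℝ) ^ (-(2:ℝ)/q) := by
    rw [hquarter, ← Real.rpow_mul (by norm_num)]
    ring_nf
  -- upper bound for each x in the unit ball
  have key : ∀ x : lp (fun _ : ℕ => ℂ) p, ‖x‖ ≤ 1 → ‖P x‖ ≤ (2:ℝ) ^ (-(2:ℝ)/q) := by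
    intro x hx
    have hsum : Summable (fun j => ‖(x : ℕ → ℂ) j‖ ^ q) := (lp.memℓp x).summable hq0
    set a := ‖(x : ℕ → ℂ) 0‖ ^ q with ha
    set T := ∑' j, ‖(x : ℕ → ℂ) j‖ ^ q with hT
    have ha0 : 0 ≤ a := Real.rpow_nonneg (norm_nonneg _) _
    have hTx : ‖x‖ ^ q = T := lp.norm_rpow_eq_tsum hq0 x
    have hT1 : T ≤ 1 := by
      rw [← hTx]; exact Real.rpow_le_one (norm_nonneg _) hx hq0.le
    have haT : a ≤ T :=
      Summable.le_tsum hsum 0 (fun j _ => Real.rpow_nonneg (norm_nonneg _) _)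
    have hsplit : T = a + ∑' j, ‖(x : ℕ → ℂ) (j+1)‖ ^ q := Summable.tsum_eq_zero_add hsum
    have hPxq : ‖P x‖ ^ q = a * (T - a) := by
      rw [lp.norm_rpow_eq_tsum hq0 (P x)]
      have hterm : ∀ j, ‖(P x : ℕ → ℂ) j‖ ^ q
          = ‖(x : ℕ → ℂ) 0‖ ^ q * ‖(x : ℕ → ℂ) (j+1)‖ ^ q := by
        intro j
        rw [hP, norm_mul, Real.mul_rpow (norm_nonneg _) (norm_nonneg _)]
      refine (tsum_congr hterm).trans ?_
      rw [tsum_mul_left, ← ha]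
      have : (∑' j, ‖(x : ℕ → ℂ) (j+1)‖ ^ q) = T - a := by linarith
      rw [this]
    have hmul : a * (T - a) ≤ 1/4 := by nlinarith [sq_nonneg (2*a - T), sq_nonneg (1 - T)]
    have hmul0 : 0 ≤ a * (T - a) := mul_nonneg ha0 (by linarith)
    calc ‖P x‖ = (‖P x‖ ^ q) ^ (1/q) := by
          rw [one_div, Real.rpow_rpow_inv (norm_nonneg _) hqne]
      _ = (a * (T - a)) ^ (1/q) := by rw [hPxq]
      _ ≤ ((1/4 : ℝ)) ^ (1/q) := Real.rpow_le_rpow hmul0 hmul (by positivity)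
      _ = (2:ℝ) ^ (-(2:ℝ)/q) := htarget
  -- the witness
  set c : ℝ := (2:ℝ) ^ (-(1:ℝ)/q) with hc
  have hc0 : 0 < c := Real.rpow_pos_of_pos (by norm_num) _
  have hcq : c ^ q = 1/2 := by
    rw [hc, ← Real.rpow_mul (by norm_num)]
    rw [div_mul_cancel₀ _ hqne]
    rw [show (-1:ℝ) = ((-1:ℤ):ℝ) by norm_num, Real.rpow_intCast]; norm_num
  have hcc : c * c = (2:ℝ) ^ (-(2:ℝ)/q) := by
    rw [hc, ← Real.rpow_add (by norm_num)]
    ring_nf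
  obtain ⟨x₀, hx₀app, hx₀q⟩ :
      ∃ x₀ : lp (fun _ : ℕ => ℂ) p,
        (∀ j, (x₀ : ℕ → ℂ) j = if j = 0 ∨ j = 1 then (c:ℂ) else 0) ∧
        ‖x₀‖ ^ q = 2 * ‖(c:ℂ)‖ ^ q := by
    refine ⟨∑ i ∈ ({0, 1} : Finset ℕ), lp.single p i ((c : ℂ)), fun j => ?_, ?_⟩
    · rw [lp.coeFn_sum, Finset.sum_apply]
      rcases Decidable.em (j = 0 ∨ j = 1) with h | h
      · rcases h with rfl | rfl <;> simp [lp.single_apply]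
      · push_neg at h
        rw [if_neg (by tauto)]
        simp [lp.single_apply, h.1, h.2]
    · have h := lp.norm_sum_single hq0 (fun _ : ℕ => (c : ℂ)) ({0,1} : Finset ℕ)
      simpa [two_mul] using h
  have hx₀norm : ‖x₀‖ = 1 := by
    have h2 : ‖x₀‖ ^ q = 1 := by
      rw [hx₀q, Complex.norm_real, Real.norm_eq_abs, abs_of_pos hc0, hcq]; norm_num
    have := congrArg (fun t : ℝ => t ^ (1/q)) h2
    simpa [one_div, Real.rpow_rpow_inv (norm_nonneg _) hqne, Real.one_rpow] using this
  have hPx₀ : ‖P x₀‖ = (2:ℝ) ^ (-(2:ℝ)/q) := by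
    have hPapp : ∀ j, (P x₀ : ℕ → ℂ) j = if j = 0 then ((c:ℂ) * (c:ℂ)) else 0 := by
      intro j
      rw [hP, hx₀app 0, hx₀app (j+1)]
      rcases Decidable.em (j = 0) with rfl | h
      · simp
      · rw [if_neg h, if_pos (Or.inl rfl), if_neg (by omega), mul_zero]
    have hsum : ‖P x₀‖ ^ q = ((c:ℝ) * c) ^ q := by
      rw [lp.norm_rpow_eq_tsum hq0 (P x₀)]
      rw [tsum_eq_single 0 (by intro j hj; rw [hPapp j, if_neg hj]; simp [Real.zero_rpow hqne]; exact Real.zero_rpow hqne)]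
      rw [hPapp 0, if_pos rfl, norm_mul]
      rw [Complex.norm_real, Real.norm_eq_abs, abs_of_pos hc0]
    have := congrArg (fun t : ℝ => t ^ (1/q)) hsum
    simp only [one_div] at this
    rw [Real.rpow_rpow_inv (norm_nonneg _) hqne,
      Real.rpow_rpow_inv (by positivity) hqne] at this
    rw [this, hcc]
  -- conclude
  have hne : Nonempty {x : lp (fun _ : ℕ => ℂ) p // ‖x‖ ≤ 1} := ⟨⟨0, by simp⟩⟩
  have hbdd : BddAbove (Set.range fun x : {x : lp (fun _ : ℕ => ℂ) p // ‖x‖ ≤ 1} => ‖P x.1‖) := by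
    refine ⟨(2:ℝ) ^ (-(2:ℝ)/q), ?_⟩
    rintro _ ⟨x, rfl⟩
    exact key x.1 x.2
  refine le_antisymm (ciSup_le fun x => key x.1 x.2) ?_
  have hle := le_ciSup hbdd (⟨x₀, hx₀norm.le⟩ : {x : lp (fun _ : ℕ => ℂ) p // ‖x‖ ≤ 1})
  rwa [hPx₀] at hle
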